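/- arXiv:1206.2873 — 2 statements merged into one kernel-verified Lean document; each statement's English description precedes it below -/
import Mathlib

section
/- Let (S, μ) be a finite measure space, let 0 < m < M be real numbers, and let β, g : S → ℝ be measurable functions with m ≤ β ≤ M μ-a.e. and g integrable. Suppose that for every bounded measurable function l : S → ℝ for which there exists ε₀ > 0 such that m ≤ β + ε·l ≤ M μ-a.e. for all ε ∈ (0, ε₀], one has ∫_S l·(2β + g) dμ ≥ 0. Then β(x) = min(max(−g(x)/2, m), M) for μ-a.e. x ∈ S. -/
open MeasureTheory Filter

lemma proj_key (m M b c : ℝ) (hmM : m ≤ M) (hb1 : m ≤ b) (hb2 : b ≤ M) :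
    (min (max c m) M - b) * (min (max c m) M - c) ≤ 0 := by
  rcases le_total c m with hc | hc
  · rw [max_eq_right hc, min_eq_left hmM]
    nlinarith
  · rw [max_eq_left hc]
    rcases le_total c M with hcM | hcM
    · rw [min_eq_left hcM]; simp
    · rw [min_eq_right hcM]
      nlinarith

/-- Characterization of the optimal heat transfer coefficient for the nonlocal thermistor
problem: if `m ≤ β ≤ M` a.e. and the first-order variational inequality
`∫ l (2β + g) dμ ≥ 0` holds for every bounded measurable admissible variation direction `l`,
then `β = min (max (-g/2) m) M` almost everywhere. -/
theorem stmt1 {S : Type*} [MeasurableSpace S] (μ : Measure S) [IsFiniteMeasure μ]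
    (m M : ℝ) (hm : 0 < m) (hmM : m < M)
    (β g : S → ℝ) (hβmeas : Measurable β) (hgmeas : Measurable g)
    (hβ : ∀ᵐ x ∂μ, m ≤ β x ∧ β x ≤ M)
    (hgint : Integrable g μ)
    (h : ∀ l : S → ℝ, Measurable l → (∃ C : ℝ, ∀ x, |l x| ≤ C) →
      (∃ ε₀ > (0:ℝ), ∀ ε : ℝ, 0 < ε → ε ≤ ε₀ →
        ∀ᵐ x ∂μ, m ≤ β x + ε * l x ∧ β x + ε * l x ≤ M) →
      0 ≤ ∫ x, l x * (2 * β x + g x) ∂μ) :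
    ∀ᵐ x ∂μ, β x = min (max (-(g x) / 2) m) M := by
  set β' : S → ℝ := fun x => min (max (β x) m) M with hβ'def
  set P : S → ℝ := fun x => min (max (-(g x) / 2) m) M with hPdef
  set l : S → ℝ := fun x => P x - β' x with hldef
  have hβ'meas : Measurable β' := ((hβmeas.max measurable_const).min measurable_const)
  have hPmeas : Measurable P :=
    (((hgmeas.neg.div_const 2).max measurable_const).min measurable_const)
  have hlmeas : Measurable l := hPmeas.sub hβ'meas
  have hmM' : m ≤ M := hmM.le
  have hβ'mem : ∀ x, m ≤ β' x ∧ β' x ≤ M := fun x =>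
    ⟨le_min (le_max_right _ _) hmM', min_le_right _ _⟩
  have hPmem : ∀ x, m ≤ P x ∧ P x ≤ M := fun x =>
    ⟨le_min (le_max_right _ _) hmM', min_le_right _ _⟩
  have hβ'eq : ∀ᵐ x ∂μ, β' x = β x := by
    filter_upwards [hβ] with x ⟨h1, h2⟩
    simp [hβ'def, max_eq_left h1, min_eq_left h2]
  have hlbd : ∀ x, |l x| ≤ M - m := by
    intro x
    have h1 := hβ'mem x; have h2 := hPmem x
    rw [abs_le]; constructor <;> simp [hldef] <;> linarith [h1.1, h1.2, h2.1, h2.2]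
  -- admissibility
  have hadm : ∃ ε₀ > (0:ℝ), ∀ ε : ℝ, 0 < ε → ε ≤ ε₀ →
      ∀ᵐ x ∂μ, m ≤ β x + ε * l x ∧ β x + ε * l x ≤ M := by
    refine ⟨1, one_pos, fun ε hε hε1 => ?_⟩
    filter_upwards [hβ, hβ'eq] with x ⟨h1, h2⟩ heq
    have hP := hPmem x
    simp only [hldef, heq]
    constructor <;> nlinarith [hP.1, hP.2]
  have hIneq := h l hlmeas ⟨M - m, hlbd⟩ hadm
  -- integrability
  have hβint : Integrable β μ := by
    refine Integrable.congr ?_ hβ'eq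
    refine (integrable_const (M : ℝ)).mono' hβ'meas.aestronglyMeasurable ?_
    filter_upwards with x
    have h1 := hβ'mem x
    rw [Real.norm_eq_abs, abs_le]; exact ⟨by linarith [h1.1], h1.2⟩
  have hfint : Integrable (fun x => l x * (2 * β x + g x)) μ := by
    exact (((hβint.const_mul 2).add hgint).bdd_mul hlmeas.aestronglyMeasurable
      (c := M - m) (Eventually.of_forall fun x => (Real.norm_eq_abs _ ▸ hlbd x)))
  have hl2int : Integrable (fun x => l x * l x) μ := by
    refine (integrable_const ((M - m) * (M - m))).mono'
      (hlmeas.mul hlmeas).aestronglyMeasurable ?_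
    filter_upwards with x
    rw [Real.norm_eq_abs, abs_mul]
    exact mul_le_mul (hlbd x) (hlbd x) (abs_nonneg _) (by linarith [hmM'])
  -- pointwise bound: l * (2β + g) ≤ -2 l²  a.e.
  have hpt : ∀ᵐ x ∂μ, l x * (2 * β x + g x) ≤ -2 * (l x * l x) := by
    filter_upwards [hβ, hβ'eq] with x ⟨h1, h2⟩ heq
    have key := proj_key m M (β x) (-(g x) / 2) hmM' h1 h2
    simp only [hldef, heq, hPdef] at *
    nlinarith [key]
  have hle : ∫ x, l x * (2 * β x + g x) ∂μ ≤ ∫ x, -2 * (l x * l x) ∂μ :=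
    integral_mono_ae hfint (hl2int.const_mul (-2)) hpt
  rw [integral_const_mul] at hle
  have hl2nn : 0 ≤ ∫ x, l x * l x ∂μ :=
    integral_nonneg fun x => mul_self_nonneg _
  have hl2zero : ∫ x, l x * l x ∂μ = 0 := by linarith
  have hl0 : (fun x => l x * l x) =ᵐ[μ] 0 :=
    (integral_eq_zero_iff_of_nonneg (fun x => mul_self_nonneg (l x)) hl2int).mp hl2zero
  filter_upwards [hl0, hβ'eq] with x hx heq
  have hlx : l x = 0 := by
    have hxx : l x * l x = 0 := hx
    nlinarith
  have hsub : P x - β' x = 0 := hlx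
  have : β x = P x := by linarith [heq]
  exact this
end

section
/- Let (Ω, μ) be a finite measure space with μ(Ω) > 0, let λ > 0, L ≥ 0, c > 0, C ≥ 0, K > 0, and let f : ℝ → ℝ be Lipschitz with constant L satisfying c ≤ f(ξ) for all ξ ∈ ℝ and f(ξ) ≤ C for all ξ with |ξ| ≤ K. Then for all measurable u₁, u₂ : Ω → ℝ with |u₁| ≤ K and |u₂| ≤ K μ-a.e., setting a₀ = c·μ(Ω), one has ‖λ f(u₁)/(∫_Ω f(u₁) dμ)² − λ f(u₂)/(∫_Ω f(u₂) dμ)²‖_{L²(μ)} ≤ (λL/a₀² + 2λCLμ(Ω)/a₀³)·‖u₁ − u₂‖_{L²(μ)}. -/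
open MeasureTheory

open scoped ENNReal

lemma aux_inv_sq {a I₁ I₂ : ℝ} (ha : 0 < a) (h1 : a ≤ I₁) (h2 : a ≤ I₂) :
    |1/I₁^2 - 1/I₂^2| ≤ 2*|I₁-I₂|/a^3 := by
  have hI1 : 0 < I₁ := ha.trans_le h1
  have hI2 : 0 < I₂ := ha.trans_le h2
  have key : 1/I₁^2 - 1/I₂^2 = ((I₂-I₁)*(I₂+I₁))/(I₁^2*I₂^2) := by
    field_simp; ring
  rw [key, abs_div, abs_mul, abs_of_pos (by positivity : (0:ℝ) < I₁^2*I₂^2),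
    abs_of_pos (by positivity : (0:ℝ) < I₂+I₁), abs_sub_comm I₂ I₁,
    div_le_div_iff₀ (by positivity) (by positivity)]
  have ht : 0 ≤ |I₁ - I₂| := abs_nonneg _
  have haa : a*a ≤ I₁*I₁ := mul_le_mul h1 h1 ha.le hI1.le
  have hbb : a*a ≤ I₂*I₂ := mul_le_mul h2 h2 ha.le hI2.le
  have ha3 : (a*a)*a ≤ (I₁*I₁)*I₂ := mul_le_mul haa h2 ha.le (by positivity)
  have ha3' : (a*a)*a ≤ (I₂*I₂)*I₁ := mul_le_mul hbb h1 ha.le (by positivity)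
  nlinarith [mul_le_mul_of_nonneg_left (mul_le_mul_of_nonneg_left ha3 hI2.le) ht,
    mul_le_mul_of_nonneg_left (mul_le_mul_of_nonneg_left ha3' hI1.le) ht]

/-- `L²`-Lipschitz continuity of the nonlocal source map `u ↦ λ f(u)/(∫ f(u) dμ)²` on
uniformly essentially bounded states (used in the uniqueness proof, Theorem 5.1), with
`a₀ = c·μ(Ω)`. -/
theorem stmt14 {Ω : Type*} [MeasurableSpace Ω] (μ : Measure Ω) [IsFiniteMeasure μ]
    (hμ : 0 < (μ Set.univ).toReal)
    (lam L c C K : ℝ) (hlam : 0 < lam) (hL : 0 ≤ L) (hc : 0 < c) (hC : 0 ≤ C) (hK : 0 < K)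
    (f : ℝ → ℝ) (hf : ∀ x y : ℝ, |f x - f y| ≤ L * |x - y|)
    (hfc : ∀ ξ : ℝ, c ≤ f ξ) (hfC : ∀ ξ : ℝ, |ξ| ≤ K → f ξ ≤ C)
    (u₁ u₂ : Ω → ℝ) (h1meas : Measurable u₁) (h2meas : Measurable u₂)
    (hb1 : ∀ᵐ x ∂μ, |u₁ x| ≤ K) (hb2 : ∀ᵐ x ∂μ, |u₂ x| ≤ K) :
    eLpNorm (fun x =>
        lam * f (u₁ x) / (∫ y, f (u₁ y) ∂μ) ^ 2 -
        lam * f (u₂ x) / (∫ y, f (u₂ y) ∂μ) ^ 2) 2 μ ≤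
      ENNReal.ofReal (lam * L / (c * (μ Set.univ).toReal) ^ 2 +
        2 * lam * C * L * (μ Set.univ).toReal / (c * (μ Set.univ).toReal) ^ 3) *
      eLpNorm (fun x => u₁ x - u₂ x) 2 μ := by
  set m : ℝ := (μ Set.univ).toReal with hm
  set a₀ : ℝ := c * m with ha₀
  have ha₀pos : 0 < a₀ := mul_pos hc hμ
  set I₁ : ℝ := ∫ y, f (u₁ y) ∂μ with hI₁def
  set I₂ : ℝ := ∫ y, f (u₂ y) ∂μ with hI₂def
  set d : Ω → ℝ := fun x => u₁ x - u₂ x with hd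
  -- f is continuous
  have hlip : LipschitzWith ⟨L, hL⟩ f := by
    apply LipschitzWith.of_dist_le_mul
    intro x y
    show dist (f x) (f y) ≤ L * dist x y
    simpa [Real.dist_eq] using hf x y
  have hfmeas : Measurable f := hlip.continuous.measurable
  -- integrability of f ∘ uᵢ
  have hfpos : ∀ ξ : ℝ, 0 < f ξ := fun ξ => hc.trans_le (hfc ξ)
  have hfi1 : Integrable (fun x => f (u₁ x)) μ := by
    refine Integrable.mono' (integrable_const C) (hfmeas.comp h1meas).aestronglyMeasurable ?_
    filter_upwards [hb1] with x hx
    rw [Real.norm_eq_abs, abs_of_pos (hfpos _)]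
    exact hfC _ hx
  have hfi2 : Integrable (fun x => f (u₂ x)) μ := by
    refine Integrable.mono' (integrable_const C) (hfmeas.comp h2meas).aestronglyMeasurable ?_
    filter_upwards [hb2] with x hx
    rw [Real.norm_eq_abs, abs_of_pos (hfpos _)]
    exact hfC _ hx
  -- lower bounds on the integrals
  have hI1 : a₀ ≤ I₁ := by
    have := integral_mono (integrable_const c) hfi1 (fun x => hfc (u₁ x))
    rwa [integral_const, smul_eq_mul, mul_comm] at this
  have hI2 : a₀ ≤ I₂ := by
    have := integral_mono (integrable_const c) hfi2 (fun x => hfc (u₂ x))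
    rwa [integral_const, smul_eq_mul, mul_comm] at this
  have hI1pos : 0 < I₁ := ha₀pos.trans_le hI1
  have hI2pos : 0 < I₂ := ha₀pos.trans_le hI2
  -- d integrable
  have hdmeas : Measurable d := h1meas.sub h2meas
  have hd_int : Integrable d μ := by
    refine Integrable.mono' (integrable_const (K + K)) hdmeas.aestronglyMeasurable ?_
    filter_upwards [hb1, hb2] with x hx1 hx2
    rw [Real.norm_eq_abs]
    calc |u₁ x - u₂ x| ≤ |u₁ x| + |u₂ x| := abs_sub _ _
      _ ≤ K + K := add_le_add hx1 hx2
  have hJnn : 0 ≤ ∫ x, |d x| ∂μ := integral_nonneg fun x => abs_nonneg _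
  set J : ℝ := ∫ x, |d x| ∂μ with hJ
  -- |I₁ - I₂| ≤ L * J
  have hdiff : |I₁ - I₂| ≤ L * J := by
    have h1 : I₁ - I₂ = ∫ x, (f (u₁ x) - f (u₂ x)) ∂μ := (integral_sub hfi1 hfi2).symm
    rw [h1]
    calc |∫ x, (f (u₁ x) - f (u₂ x)) ∂μ| ≤ ∫ x, |f (u₁ x) - f (u₂ x)| ∂μ := by
          simpa [Real.norm_eq_abs] using
            norm_integral_le_integral_norm (μ := μ) (fun x => f (u₁ x) - f (u₂ x))
      _ ≤ ∫ x, L * |d x| ∂μ := by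
          refine integral_mono (hfi1.sub hfi2).abs (hd_int.abs.const_mul L) fun x => hf _ _
      _ = L * J := integral_const_mul L _
  -- constants
  set A : ℝ := lam * L / a₀ ^ 2 with hA
  set B : ℝ := 2 * lam * C * L * J / a₀ ^ 3 with hB
  have hAnn : 0 ≤ A := by positivity
  have hBnn : 0 ≤ B := by positivity
  -- pointwise a.e. bound
  have hpt : ∀ᵐ x ∂μ, ‖lam * f (u₁ x) / I₁ ^ 2 - lam * f (u₂ x) / I₂ ^ 2‖ ≤
      ‖A * |d x| + B‖ := by
    filter_upwards [hb2] with x hx2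
    have hsplit : lam * f (u₁ x) / I₁ ^ 2 - lam * f (u₂ x) / I₂ ^ 2 =
        lam * (f (u₁ x) - f (u₂ x)) / I₁ ^ 2 +
          lam * f (u₂ x) * (1 / I₁ ^ 2 - 1 / I₂ ^ 2) := by
      field_simp
      ring
    have e1 : |lam * (f (u₁ x) - f (u₂ x)) / I₁ ^ 2| ≤ A * |d x| := by
      rw [abs_div, abs_mul, abs_of_pos hlam, abs_of_pos (by positivity : (0:ℝ) < I₁ ^ 2)]
      calc lam * |f (u₁ x) - f (u₂ x)| / I₁ ^ 2
          ≤ lam * (L * |d x|) / a₀ ^ 2 := by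
            gcongr
            exact hf _ _
        _ = A * |d x| := by rw [hA]; ring
    have e2 : |lam * f (u₂ x) * (1 / I₁ ^ 2 - 1 / I₂ ^ 2)| ≤ B := by
      rw [abs_mul, abs_mul, abs_of_pos hlam, abs_of_pos (hfpos _)]
      calc lam * f (u₂ x) * |1 / I₁ ^ 2 - 1 / I₂ ^ 2|
          ≤ lam * C * (2 * (L * J) / a₀ ^ 3) := by
            gcongr
            · exact hfC _ hx2
            · exact (aux_inv_sq ha₀pos hI1 hI2).trans (by gcongr)
        _ = B := by rw [hB]; ring
    rw [Real.norm_eq_abs, Real.norm_eq_abs, hsplit]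
    refine ((abs_add_le _ _).trans (add_le_add e1 e2)).trans (le_abs_self _)
  -- the dominating function and its eLpNorm
  have hhmeas1 : AEStronglyMeasurable (fun x => A * |d x|) μ :=
    ((hdmeas.abs.const_mul A)).aestronglyMeasurable
  have hhmeas2 : AEStronglyMeasurable (fun _ : Ω => B) μ := aestronglyMeasurable_const
  have hμuniv0 : μ Set.univ ≠ 0 := by
    intro h
    rw [hm, h] at hμ
    simp at hμ
  have hμ0 : μ ≠ 0 := by
    intro h
    exact hμuniv0 (by rw [h]; simp)
  have hμunivtop : μ Set.univ ≠ ⊤ := measure_ne_top μ _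
  set N : ℝ≥0∞ := eLpNorm d 2 μ with hN
  -- first term
  have ht1 : eLpNorm (fun x => A * |d x|) 2 μ = ENNReal.ofReal A * N := by
    have : (fun x => A * |d x|) = A • (fun x => |d x|) := by
      funext x; simp [smul_eq_mul]
    rw [this, eLpNorm_const_smul]
    congr 1
    · simp [Real.enorm_eq_ofReal hAnn]
    · have : (fun x => |d x|) = fun x => ‖d x‖ := by funext x; rw [Real.norm_eq_abs]
      rw [this, eLpNorm_norm]
  -- L¹-L² comparison
  have hL12 : ENNReal.ofReal J ≤ N * μ Set.univ ^ ((1:ℝ)/2) := by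
    have h1 : ENNReal.ofReal J = eLpNorm d 1 μ := by
      rw [eLpNorm_one_eq_lintegral_enorm, ← ofReal_integral_norm_eq_lintegral_enorm hd_int]
      simp [Real.norm_eq_abs, hJ]
    rw [h1]
    have := eLpNorm_le_eLpNorm_mul_rpow_measure_univ (p := 1) (q := 2)
      (by norm_num) hdmeas.aestronglyMeasurable (μ := μ) (f := d)
    convert this using 2
    norm_num
  -- second term
  have ht2 : eLpNorm (fun _ : Ω => B) 2 μ ≤
      ENNReal.ofReal (2 * lam * C * L * m / a₀ ^ 3) * N := by
    rw [eLpNorm_const B (by norm_num) hμ0]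
    have hBsplit : ENNReal.ofReal B =
        ENNReal.ofReal (2 * lam * C * L / a₀ ^ 3) * ENNReal.ofReal J := by
      rw [← ENNReal.ofReal_mul (by positivity)]
      congr 1
      rw [hB]; ring
    have h2r : (1 : ℝ) / (2 : ℝ≥0∞).toReal = (1:ℝ)/2 := by norm_num
    rw [Real.enorm_eq_ofReal hBnn, h2r, hBsplit]
    calc ENNReal.ofReal (2 * lam * C * L / a₀ ^ 3) * ENNReal.ofReal J *
          μ Set.univ ^ ((1:ℝ)/2)
        ≤ ENNReal.ofReal (2 * lam * C * L / a₀ ^ 3) *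
            (N * μ Set.univ ^ ((1:ℝ)/2)) * μ Set.univ ^ ((1:ℝ)/2) := by
          gcongr
      _ = ENNReal.ofReal (2 * lam * C * L / a₀ ^ 3) *
            (μ Set.univ ^ ((1:ℝ)/2) * μ Set.univ ^ ((1:ℝ)/2)) * N := by ring
      _ = ENNReal.ofReal (2 * lam * C * L / a₀ ^ 3) * μ Set.univ * N := by
          rw [← ENNReal.rpow_add _ _ hμuniv0 hμunivtop]
          norm_num
      _ = ENNReal.ofReal (2 * lam * C * L * m / a₀ ^ 3) * N := by
          rw [← ENNReal.ofReal_toReal hμunivtop, ← hm,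
            ← ENNReal.ofReal_mul (by positivity)]
          congr 2
          ring
  -- put everything together
  calc eLpNorm (fun x => lam * f (u₁ x) / I₁ ^ 2 - lam * f (u₂ x) / I₂ ^ 2) 2 μ
      ≤ eLpNorm (fun x => A * |d x| + B) 2 μ := eLpNorm_mono_ae hpt
    _ ≤ eLpNorm (fun x => A * |d x|) 2 μ + eLpNorm (fun _ : Ω => B) 2 μ :=
        eLpNorm_add_le hhmeas1 hhmeas2 one_le_two
    _ ≤ ENNReal.ofReal A * N + ENNReal.ofReal (2 * lam * C * L * m / a₀ ^ 3) * N := by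
        rw [ht1]; gcongr
    _ = ENNReal.ofReal (A + 2 * lam * C * L * m / a₀ ^ 3) * N := by
        rw [ENNReal.ofReal_add hAnn (by positivity), add_mul]
    _ = ENNReal.ofReal (lam * L / (c * m) ^ 2 + 2 * lam * C * L * m / (c * m) ^ 3) * N := by
        rw [hA, ha₀]
end
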